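/- Let K be a field, V a K-vector space, ∇ : V → V a K-linear map, T_1,…,T_m pairwise distinct nonzero elements of K, and H_1,…,H_m ∈ V with ∇H_i = T_i·H_i for each i. Set Φ_μ := Σ_{j=1}^{m} (∏_{s≠j}(1 − T_j/T_s))^{-1}·H_j and Φ⁽ᵏ⁾ := (−∇)^{m−k}Φ_μ for 1 ≤ k ≤ m. Then Σ_{k=1}^{m} e_{m−k}(1/T_1,…,1/T_m)·Φ⁽ᵏ⁾ = (T_1 T_2 ⋯ T_m)^{-1}·∇Φ⁽¹⁾. -/

import Mathlib

/-- The elementary symmetric function `e_r` of the family `(f i)_{i ∈ s}`,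
with the conventions `e_0 = 1` and `e_r = 0` for `r > #s`. -/
def esym {ι : Type*} [DecidableEq ι] {K : Type*} [CommRing K]
    (s : Finset ι) (f : ι → K) (r : ℕ) : K :=
  ∑ A ∈ s.powersetCard r, ∏ i ∈ A, f i

/-- The distinguished element `Φ_μ = ∑_j (∏_{s≠j} (1 - T_j/T_s))⁻¹ • H_j`. -/
noncomputable def Phimu {K : Type*} [Field K] {V : Type*} [AddCommGroup V] [Module K V]
    (m : ℕ) (T : Fin m → K) (H : Fin m → V) : V :=
  ∑ j, (∏ s ∈ Finset.univ.erase j, (1 - T j / T s))⁻¹ • H j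

lemma esym_gen {ι : Type*} [DecidableEq ι] {K : Type*} [CommRing K]
    (s : Finset ι) (f : ι → K) (x : K) :
    ∑ n ∈ Finset.range (s.card + 1), esym s f n * x ^ n = ∏ i ∈ s, (x * f i + 1) := by
  rw [Finset.prod_add (fun i => x * f i) (fun _ => (1:K)) s]
  erw [Finset.powerset_card_disjiUnion, Finset.sum_disjiUnion]
  refine Finset.sum_congr rfl fun n hn => ?_
  unfold esym
  rw [Finset.sum_mul]
  refine Finset.sum_congr rfl fun A hA => ?_
  rw [Finset.mem_powersetCard] at hA
  simp [Finset.prod_mul_distrib, hA.2, mul_comm, mul_left_comm]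

lemma keysum {K : Type*} [Field K] {m : ℕ} (hm : 0 < m) (T : Fin m → K)
    (hT0 : ∀ i, T i ≠ 0) (j : Fin m) :
    ∑ n ∈ Finset.range m, esym Finset.univ (fun i => (T i)⁻¹) n * (-T j) ^ n
      = (∏ i, T i)⁻¹ * ((-T j) ^ (m - 1) * T j) := by
  have h0 : ∑ n ∈ Finset.range (m + 1),
      esym Finset.univ (fun i => (T i)⁻¹) n * (-T j) ^ n = 0 := by
    have h := esym_gen (Finset.univ : Finset (Fin m)) (fun i => (T i)⁻¹) (-T j)
    rw [Finset.card_univ, Fintype.card_fin] at h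
    rw [h]
    refine Finset.prod_eq_zero (Finset.mem_univ j) ?_
    rw [neg_mul, mul_inv_cancel₀ (hT0 j)]; ring
  have hm' : esym Finset.univ (fun i : Fin m => (T i)⁻¹) m = ∏ i, (T i)⁻¹ := by
    have hps : Finset.powersetCard m (Finset.univ : Finset (Fin m)) = {Finset.univ} := by
      simpa using Finset.powersetCard_self (Finset.univ : Finset (Fin m))
    unfold esym
    rw [hps, Finset.sum_singleton]
  have hx : (-T j) ^ m = (-T j) ^ (m - 1) * (-T j) := by
    rw [← pow_succ, Nat.sub_add_cancel hm]
  have hp : (∏ i, T i)⁻¹ = ∏ i, (T i)⁻¹ := by rw [← Finset.prod_inv_distrib]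
  rw [Finset.sum_range_succ, hm', ← hp, hx] at h0
  linear_combination h0

/-- Theorem 3.2, first identity (3.36), of Bergeron–Garsia: with
`Φ⁽ᵏ⁾ := (-∇)^{m-k} Φ_μ` (here `k : Fin m` stands for the 1-indexed `k+1`),
`∑_{k=1}^m e_{m-k}(1/T_1, …, 1/T_m) • Φ⁽ᵏ⁾ = (T_1 ⋯ T_m)⁻¹ • ∇ Φ⁽¹⁾`. -/
theorem statement10 {K : Type*} [Field K] {V : Type*} [AddCommGroup V] [Module K V]
    (m : ℕ) (T : Fin m → K) (hT0 : ∀ i, T i ≠ 0) (hTinj : Function.Injective T)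
    (nabla : Module.End K V) (H : Fin m → V)
    (heig : ∀ i, nabla (H i) = T i • H i) :
    ∑ k : Fin m, esym Finset.univ (fun i => (T i)⁻¹) (m - 1 - (k : ℕ)) •
        ((-nabla) ^ (m - 1 - (k : ℕ))) (Phimu m T H) =
      (∏ i, T i)⁻¹ • nabla (((-nabla) ^ (m - 1)) (Phimu m T H)) := by
  classical
  set c : Fin m → K := fun j => (∏ s ∈ Finset.univ.erase j, (1 - T j / T s))⁻¹ with hc
  have hpow : ∀ (n : ℕ) (j : Fin m), ((-nabla) ^ n) (H j) = ((-T j) ^ n) • H j := by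
    intro n j
    induction n with
    | zero => simp
    | succ n ih =>
      rw [pow_succ', Module.End.mul_apply, ih, map_smul, LinearMap.neg_apply, heig,
        pow_succ, mul_comm ((-T j) ^ n), ← smul_smul, neg_smul]
      rw [smul_comm, smul_neg]
  have hphi : ∀ n : ℕ, ((-nabla) ^ n) (Phimu m T H) = ∑ j, (c j * (-T j) ^ n) • H j := by
    intro n
    unfold Phimu
    rw [map_sum]
    exact Finset.sum_congr rfl fun j _ => by rw [map_smul, hpow, smul_smul]
  have hnphi : nabla (((-nabla) ^ (m - 1)) (Phimu m T H))
      = ∑ j, (c j * (-T j) ^ (m - 1) * T j) • H j := by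
    rw [hphi, map_sum]
    exact Finset.sum_congr rfl fun j _ => by
      rw [map_smul, heig, smul_smul, mul_assoc]
  calc ∑ k : Fin m, esym Finset.univ (fun i => (T i)⁻¹) (m - 1 - (k : ℕ)) •
        ((-nabla) ^ (m - 1 - (k : ℕ))) (Phimu m T H)
      = ∑ j, ∑ k : Fin m, (esym Finset.univ (fun i => (T i)⁻¹) (m - 1 - (k : ℕ)) *
          (c j * (-T j) ^ (m - 1 - (k : ℕ)))) • H j := by
        rw [Finset.sum_comm]
        exact Finset.sum_congr rfl fun k _ => by
          rw [hphi, Finset.smul_sum]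
          exact Finset.sum_congr rfl fun j _ => by rw [smul_smul]
    _ = ∑ j, ((∏ i, T i)⁻¹ * (c j * (-T j) ^ (m - 1) * T j)) • H j := by
        refine Finset.sum_congr rfl fun j _ => ?_
        rw [← Finset.sum_smul]
        congr 1
        have hm : 0 < m := j.pos
        have hre : ∑ k : Fin m, esym Finset.univ (fun i => (T i)⁻¹) (m - 1 - (k : ℕ)) *
            (c j * (-T j) ^ (m - 1 - (k : ℕ)))
            = ∑ n ∈ Finset.range m, esym Finset.univ (fun i => (T i)⁻¹) n *
              (c j * (-T j) ^ n) := by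
          rw [Fin.sum_univ_eq_sum_range
            (fun k => esym Finset.univ (fun i => (T i)⁻¹) (m - 1 - k) *
              (c j * (-T j) ^ (m - 1 - k)))]
          exact Finset.sum_range_reflect
            (fun n => esym Finset.univ (fun i => (T i)⁻¹) n * (c j * (-T j) ^ n)) m
        have hk := keysum hm T hT0 j
        calc ∑ k : Fin m, esym Finset.univ (fun i => (T i)⁻¹) (m - 1 - (k : ℕ)) *
              (c j * (-T j) ^ (m - 1 - (k : ℕ)))
            = c j * ∑ n ∈ Finset.range m,
                esym Finset.univ (fun i => (T i)⁻¹) n * (-T j) ^ n := by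
              rw [hre, Finset.mul_sum]; exact Finset.sum_congr rfl fun n _ => by ring
          _ = (∏ i, T i)⁻¹ * (c j * (-T j) ^ (m - 1) * T j) := by rw [hk]; ring
    _ = (∏ i, T i)⁻¹ • nabla (((-nabla) ^ (m - 1)) (Phimu m T H)) := by
        rw [hnphi, Finset.smul_sum]
        exact Finset.sum_congr rfl fun j _ => by rw [smul_smul]
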